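/- Let C be a finite subset of a Hilbert space H containing 0, with diameter d. Then for each integer n with 2^{-n} ≤ d there exists a finite set C_n ⊂ C − C (differences of elements of C) such that every c ∈ C_n has norm |c|_H ≤ 2^{-n+2}, the cardinality of C_n is at most N_{2^{-n}} + 1 where N_λ is the λ-covering number of C by balls centered in C, and every element c ∈ C can be written as c = Σ_{n : 2^{-n} ≤ 2d} c_n with c_n ∈ C_n (a finite sum, since C is finite). -/

import Mathlib

/-- `N_λ`: the minimum number of balls of radius `λ` centered at points of `C`
needed to cover `C`. -/
noncomputable def covNum {H : Type*} [NormedAddCommGroup H] (C : Set H) (lam : ℝ) : ℕ :=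
  sInf {n : ℕ | ∃ s : Finset H, ↑s ⊆ C ∧ s.card = n ∧ ∀ c ∈ C, ∃ b ∈ s, ‖c - b‖ ≤ lam}

/-- Auxiliary downward chaining iteration. -/
noncomputable def chainAux {H : Type*} [NormedAddCommGroup H]
    (π : ℤ → H → H) (M : ℤ) (c : H) : ℕ → H
  | 0 => c
  | k + 1 => π (M - (k + 1)) (chainAux π M c k)

/-- The chaining approximation at level `n`. -/
noncomputable def chainP {H : Type*} [NormedAddCommGroup H]
    (π : ℤ → H → H) (M : ℤ) (n : ℤ) (c : H) : H :=
  chainAux π M c (M - n).toNat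

lemma chainP_of_le {H : Type*} [NormedAddCommGroup H]
    (π : ℤ → H → H) (M n : ℤ) (c : H) (h : M ≤ n) : chainP π M n c = c := by
  have : (M - n).toNat = 0 := by omega
  simp [chainP, this, chainAux]

lemma chainP_of_lt {H : Type*} [NormedAddCommGroup H]
    (π : ℤ → H → H) (M n : ℤ) (c : H) (h : n < M) :
    chainP π M n c = π n (chainP π M (n + 1) c) := by
  have hk : (M - n).toNat = (M - (n + 1)).toNat + 1 := by omega
  have h1 : ((M - (n + 1)).toNat : ℤ) = M - (n + 1) := Int.toNat_of_nonneg (by omega)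
  have h2 : M - (((M - (n + 1)).toNat : ℤ) + 1) = n := by omega
  rw [chainP, hk, chainAux, h2, chainP]

lemma chainP_mem {H : Type*} [NormedAddCommGroup H]
    (π : ℤ → H → H) (M : ℤ) (C : Finset H) (hπ : ∀ n x, x ∈ C → π n x ∈ C)
    (c : H) (hc : c ∈ C) (n : ℤ) : chainP π M n c ∈ C := by
  rw [chainP]
  generalize (M - n).toNat = k
  induction k with
  | zero => simpa [chainAux] using hc
  | succ k ih => exact hπ _ _ ih

lemma sum_telescope_Ioc {H : Type*} [AddCommGroup H] (f : ℤ → H) {a b : ℤ} (hab : a ≤ b) :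
    ∑ n ∈ Finset.Ioc a b, (f n - f (n - 1)) = f b - f a := by
  refine Int.le_induction
    (motive := fun b _ => ∑ n ∈ Finset.Ioc a b, (f n - f (n - 1)) = f b - f a) ?_ ?_ b hab
  · simp
  · intro n hn ih
    have hins : Finset.Ioc a (n + 1) = insert (n + 1) (Finset.Ioc a n) := by
      ext x
      simp only [Finset.mem_Ioc, Finset.mem_insert]
      omega
    rw [hins, Finset.sum_insert (by simp), ih]
    simp only [add_sub_cancel_right]
    abel

/-- Chaining decomposition: for a finite set `C ∋ 0` in a Hilbert space with
diameter `d`, there are sets `C_n ⊆ C - C` of cardinality at most `N_{2^{-n}} + 1`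
consisting of elements of norm at most `2^{-n+2}`, such that every `c ∈ C` is a
finite sum `c = Σ_n c_n` with `c_n ∈ C_n`, over `n` with `2^{-n} ≤ 2d`. -/
theorem chaining_decomposition
    {H : Type*} [NormedAddCommGroup H] [InnerProductSpace ℝ H] [CompleteSpace H]
    (C : Finset H) (h0 : (0 : H) ∈ C) :
    ∃ Cn : ℤ → Finset H,
      (∀ n : ℤ, (2 : ℝ) ^ (-n) ≤ 2 * Metric.diam (↑C : Set H) →
        (↑(Cn n) ⊆ {z : H | ∃ a ∈ C, ∃ b ∈ C, z = a - b} ∧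
          (∀ c ∈ Cn n, ‖c‖ ≤ (2 : ℝ) ^ (-n + 2)) ∧
          (Cn n).card ≤ covNum (↑C : Set H) ((2 : ℝ) ^ (-n)) + 1)) ∧
      ∀ c ∈ C, ∃ g : ℤ → H,
        (∀ n : ℤ, g n ≠ 0 → g n ∈ Cn n ∧ (2 : ℝ) ^ (-n) ≤ 2 * Metric.diam (↑C : Set H)) ∧
        (Function.support g).Finite ∧ c = ∑ᶠ n : ℤ, g n := by
  classical
  set d : ℝ := Metric.diam (↑C : Set H) with hd_def
  have hd0 : 0 ≤ d := Metric.diam_nonneg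
  have hnorm_le : ∀ x ∈ C, ‖x‖ ≤ d := by
    intro x hx
    have := Metric.dist_le_diam_of_mem (C.finite_toSet.isBounded)
      (by exact_mod_cast hx : x ∈ (↑C : Set H)) (by exact_mod_cast h0 : (0 : H) ∈ (↑C : Set H))
    simpa [dist_zero_right] using this
  rcases eq_or_lt_of_le hd0 with hd | hd
  · -- degenerate case: diameter 0, so C = {0}
    refine ⟨fun _ => ∅, ?_, ?_⟩
    · intro n hn
      exfalso
      have : (0 : ℝ) < (2 : ℝ) ^ (-n) := zpow_pos (by norm_num) _
      rw [← hd] at hn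
      linarith
    · intro c hc
      have hc0 : c = 0 := by
        have := hnorm_le c hc
        rw [← hd] at this
        simpa using le_antisymm this (norm_nonneg c)
      refine ⟨0, by simp, by simp, by simp [hc0]⟩
  -- main case: d > 0
  -- minimal separation ε
  have hex : ∃ ε : ℝ, 0 < ε ∧ ε ≤ d ∧ ∀ a ∈ C, ∀ b ∈ C, a ≠ b → ε ≤ ‖a - b‖ := by
    set T : Finset ℝ :=
      insert d (((C ×ˢ C).filter (fun p => p.1 ≠ p.2)).image fun p => ‖p.1 - p.2‖) with hT
    have hTne : T.Nonempty := ⟨d, Finset.mem_insert_self _ _⟩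
    refine ⟨T.min' hTne, ?_, ?_, ?_⟩
    · rw [Finset.lt_min'_iff]
      intro y hy
      rw [hT] at hy
      rcases Finset.mem_insert.1 hy with h | h
      · rw [h]; exact hd
      · rcases Finset.mem_image.1 h with ⟨p, hp, hpe⟩
        have hne : p.1 ≠ p.2 := (Finset.mem_filter.1 hp).2
        rw [← hpe]
        exact norm_pos_iff.2 (sub_ne_zero_of_ne hne)
    · exact Finset.min'_le _ _ (Finset.mem_insert_self _ _)
    · intro a ha b hb hab
      refine Finset.min'_le _ _ ?_
      rw [hT]
      refine Finset.mem_insert_of_mem (Finset.mem_image.2 ⟨(a, b), ?_, rfl⟩)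
      exact Finset.mem_filter.2 ⟨Finset.mem_product.2 ⟨ha, hb⟩, hab⟩
  obtain ⟨ε, hε, hεd, hεsep⟩ := hex
  -- choose M with 2^{-M} < ε
  obtain ⟨m, hm⟩ := exists_pow_lt_of_lt_one hε (by norm_num : (1 : ℝ) / 2 < 1)
  set M : ℤ := (m : ℤ) with hM_def
  have hMε : (2 : ℝ) ^ (-M) < ε := by
    have : (2 : ℝ) ^ (-M) = (1 / 2 : ℝ) ^ m := by
      rw [zpow_neg, hM_def, zpow_natCast, ← inv_pow, one_div]
    rw [this]; exact hm
  have hMd : (2 : ℝ) ^ (-M) < d := lt_of_lt_of_le hMε hεd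
  -- minimal nets
  have net : ∀ n : ℤ, ∃ s : Finset H, ↑s ⊆ (↑C : Set H) ∧
      s.card = covNum (↑C : Set H) ((2 : ℝ) ^ (-n)) ∧
      ∀ c ∈ (↑C : Set H), ∃ b ∈ s, ‖c - b‖ ≤ (2 : ℝ) ^ (-n) := by
    intro n
    have hne : {k : ℕ | ∃ s : Finset H, ↑s ⊆ (↑C : Set H) ∧ s.card = k ∧
        ∀ c ∈ (↑C : Set H), ∃ b ∈ s, ‖c - b‖ ≤ (2 : ℝ) ^ (-n)}.Nonempty := by
      refine ⟨C.card, C, subset_rfl, rfl, fun c hc => ⟨c, by exact_mod_cast hc, ?_⟩⟩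
      simp only [sub_self, norm_zero]
      positivity
    exact Nat.sInf_mem hne
  set S : ℤ → Finset H := fun n => (net n).choose with hS_def
  have hS : ∀ n : ℤ, ↑(S n) ⊆ (↑C : Set H) ∧
      (S n).card = covNum (↑C : Set H) ((2 : ℝ) ^ (-n)) ∧
      ∀ c ∈ (↑C : Set H), ∃ b ∈ S n, ‖c - b‖ ≤ (2 : ℝ) ^ (-n) := fun n => (net n).choose_spec
  -- the projection maps
  set π : ℤ → H → H := fun n x =>
    if d < (2 : ℝ) ^ (-n) then 0
    else if h : ∃ b ∈ S n, ‖x - b‖ ≤ (2 : ℝ) ^ (-n) then h.choose else 0 with hπ_def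
  have hπ0 : ∀ (n : ℤ) (x : H), d < (2 : ℝ) ^ (-n) → π n x = 0 := by
    intro n x h
    simp only [hπ_def]
    rw [if_pos h]
  have hπS : ∀ (n : ℤ) (x : H), x ∈ C → ¬ d < (2 : ℝ) ^ (-n) →
      π n x ∈ S n ∧ ‖x - π n x‖ ≤ (2 : ℝ) ^ (-n) := by
    intro n x hx h
    have hex : ∃ b ∈ S n, ‖x - b‖ ≤ (2 : ℝ) ^ (-n) := (hS n).2.2 x (by exact_mod_cast hx)
    have heq : π n x = hex.choose := by
      simp only [hπ_def]
      rw [if_neg h, dif_pos hex]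
    rw [heq]
    exact ⟨hex.choose_spec.1, hex.choose_spec.2⟩
  have hπC : ∀ (n : ℤ) (x : H), x ∈ C → π n x ∈ C := by
    intro n x hx
    by_cases h : d < (2 : ℝ) ^ (-n)
    · rw [hπ0 n x h]; exact h0
    · exact_mod_cast (hS n).1 (hπS n x hx h).1
  have hπd : ∀ (n : ℤ) (x : H), x ∈ C → ‖x - π n x‖ ≤ (2 : ℝ) ^ (-n) := by
    intro n x hx
    by_cases h : d < (2 : ℝ) ^ (-n)
    · rw [hπ0 n x h]
      simpa using le_of_lt (lt_of_le_of_lt (hnorm_le x hx) h)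
    · exact (hπS n x hx h).2
  -- chaining approximations
  set p : ℤ → H → H := fun n c => chainP π M n c with hp_def
  have hpC : ∀ (n : ℤ) (c : H), c ∈ C → p n c ∈ C := fun n c hc =>
    chainP_mem π M C hπC c hc n
  have hp_top : ∀ (n : ℤ) (c : H), M ≤ n → p n c = c := fun n c h => chainP_of_le π M n c h
  have hp_step : ∀ (n : ℤ) (c : H), n < M → p n c = π n (p (n + 1) c) := fun n c h =>
    chainP_of_lt π M n c h
  have hp_zero : ∀ (n : ℤ) (c : H), c ∈ C → d < (2 : ℝ) ^ (-n) → p n c = 0 := by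
    intro n c hc h
    have hnM : n < M := by
      have : -M < -n := (zpow_lt_zpow_iff_right₀ (by norm_num : (1:ℝ) < 2)).1 (hMd.trans h)
      omega
    rw [hp_step n c hnM]
    exact hπ0 _ _ h
  -- lower cutoff
  obtain ⟨n₀, hn₀⟩ := pow_unbounded_of_one_lt (2 * d) (by norm_num : (1 : ℝ) < 2)
  set A : ℤ := -(n₀ : ℤ) with hA_def
  have hA : 2 * d < (2 : ℝ) ^ (-A) := by
    have : (2 : ℝ) ^ (-A) = (2 : ℝ) ^ n₀ := by
      rw [hA_def, neg_neg, zpow_natCast]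
    rw [this]; exact hn₀
  have hdA : d < (2 : ℝ) ^ (-A) := lt_trans (by linarith) hA
  have hAM : A < M := by
    have h1 : (2 : ℝ) ^ (-M) < (2 : ℝ) ^ (-A) := lt_trans hMd hdA
    have := (zpow_lt_zpow_iff_right₀ (by norm_num : (1 : ℝ) < 2)).1 h1
    omega
  have hbig : ∀ n : ℤ, 2 * d < (2 : ℝ) ^ (-n) → ∀ c ∈ C, p n c - p (n - 1) c = 0 := by
    intro n hn c hc
    have h1 : d < (2 : ℝ) ^ (-n) := lt_trans (by linarith) hn
    have h2 : d < (2 : ℝ) ^ (-(n - 1)) :=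
      lt_of_lt_of_le h1 (zpow_le_zpow_right₀ (by norm_num) (by omega))
    rw [hp_zero n c hc h1, hp_zero (n - 1) c hc h2, sub_self]
  refine ⟨fun n => C.image (fun c => p n c - p (n - 1) c), ?_, ?_⟩
  · intro n _
    refine ⟨?_, ?_, ?_⟩
    · -- subset of C - C
      intro z hz
      obtain ⟨c, hc, rfl⟩ := Finset.mem_image.1 (by exact_mod_cast hz)
      exact ⟨p n c, hpC n c hc, p (n - 1) c, hpC (n - 1) c hc, rfl⟩
    · -- norm bound
      intro z hz
      obtain ⟨c, hc, rfl⟩ := Finset.mem_image.1 hz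
      by_cases hnM : n ≤ M
      · have h1 := hp_step (n - 1) c (by omega)
        rw [show n - 1 + 1 = n by omega] at h1
        have h2 : ‖p n c - π (n - 1) (p n c)‖ ≤ (2 : ℝ) ^ (-(n - 1)) :=
          hπd (n - 1) (p n c) (hpC n c hc)
        rw [h1]
        refine le_trans h2 (zpow_le_zpow_right₀ (by norm_num) (by omega))
      · rw [hp_top n c (by omega), hp_top (n - 1) c (by omega), sub_self]
        simp only [norm_zero]
        positivity
    · -- cardinality bound
      show (C.image (fun c => p n c - p (n - 1) c)).card ≤
        covNum (↑C : Set H) ((2 : ℝ) ^ (-n)) + 1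
      by_cases hd2 : d < (2 : ℝ) ^ (-n)
      · have hsub : (C.image (fun c => p n c - p (n - 1) c)) ⊆ {0} := by
          intro z hz
          obtain ⟨c, hc, rfl⟩ := Finset.mem_image.1 hz
          have h2 : d < (2 : ℝ) ^ (-(n - 1)) :=
            lt_of_lt_of_le hd2 (zpow_le_zpow_right₀ (by norm_num) (by omega))
          simp [hp_zero n c hc hd2, hp_zero (n - 1) c hc h2]
        have := Finset.card_le_card hsub
        simp only [Finset.card_singleton] at this
        omega
      · by_cases hnM : n < M
        · have hsub : (C.image (fun c => p n c - p (n - 1) c)) ⊆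
              (S n).image (fun y => y - π (n - 1) y) := by
            intro z hz
            obtain ⟨c, hc, rfl⟩ := Finset.mem_image.1 hz
            have h1 : p n c = π n (p (n + 1) c) := hp_step n c hnM
            have hyS : p n c ∈ S n := by
              rw [h1]; exact (hπS n (p (n + 1) c) (hpC (n + 1) c hc) hd2).1
            have h2 := hp_step (n - 1) c (by omega)
            rw [show n - 1 + 1 = n by omega] at h2
            exact Finset.mem_image.2 ⟨p n c, hyS, by rw [h2]⟩
          calc (C.image (fun c => p n c - p (n - 1) c)).card
              ≤ ((S n).image (fun y => y - π (n - 1) y)).card := Finset.card_le_card hsub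
            _ ≤ (S n).card := Finset.card_image_le
            _ = covNum (↑C : Set H) ((2 : ℝ) ^ (-n)) := (hS n).2.1
            _ ≤ covNum (↑C : Set H) ((2 : ℝ) ^ (-n)) + 1 := Nat.le_succ _
        · -- here M ≤ n, so 2^{-n} < ε and any net must contain all of C
          have hrad : (2 : ℝ) ^ (-n) < ε :=
            lt_of_le_of_lt (zpow_le_zpow_right₀ (by norm_num) (by omega : -n ≤ -M)) hMε
          have hsub' : C ⊆ S n := by
            intro x hx
            obtain ⟨b, hbS, hb⟩ := (hS n).2.2 x (by exact_mod_cast hx)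
            have hbC : b ∈ C := by exact_mod_cast (hS n).1 hbS
            have hbx : b = x := by
              by_contra hne
              have h3 := hεsep x hx b hbC (fun h => hne h.symm)
              have : ε ≤ (2 : ℝ) ^ (-n) := le_trans h3 hb
              linarith
            rwa [hbx] at hbS
          calc (C.image (fun c => p n c - p (n - 1) c)).card
              ≤ C.card := Finset.card_image_le
            _ ≤ (S n).card := Finset.card_le_card hsub'
            _ = covNum (↑C : Set H) ((2 : ℝ) ^ (-n)) := (hS n).2.1
            _ ≤ covNum (↑C : Set H) ((2 : ℝ) ^ (-n)) + 1 := Nat.le_succ _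
  · -- decomposition
    intro c hc
    refine ⟨fun n => p n c - p (n - 1) c, ?_, ?_, ?_⟩
    · intro n hg
      refine ⟨Finset.mem_image.2 ⟨c, hc, rfl⟩, ?_⟩
      rcases le_or_gt ((2 : ℝ) ^ (-n)) (2 * d) with h | h
      · exact h
      · exact absurd (hbig n h c hc) hg
    · refine Set.Finite.subset (Finset.Ioc A M).finite_toSet ?_
      intro n hn
      simp only [Function.mem_support] at hn
      simp only [Finset.coe_Ioc, Set.mem_Ioc]
      constructor
      · by_contra h
        push_neg at h
        exact hn (hbig n (lt_of_lt_of_le hA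
          (zpow_le_zpow_right₀ (by norm_num) (by omega))) c hc)
      · by_contra h
        push_neg at h
        exact hn (by rw [hp_top n c (by omega), hp_top (n - 1) c (by omega), sub_self])
    · have hsupp : Function.support (fun n => p n c - p (n - 1) c) ⊆
          ↑(Finset.Ioc A M) := by
        intro n hn
        simp only [Function.mem_support] at hn
        simp only [Finset.coe_Ioc, Set.mem_Ioc]
        constructor
        · by_contra h
          push_neg at h
          exact hn (hbig n (lt_of_lt_of_le hA
            (zpow_le_zpow_right₀ (by norm_num) (by omega))) c hc)
        · by_contra h
          push_neg at h
          exact hn (by rw [hp_top n c (by omega), hp_top (n - 1) c (by omega), sub_self])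
      have h3 : (∑ n ∈ Finset.Ioc A M, (p n c - p (n - 1) c)) = p M c - p A c :=
        sum_telescope_Ioc (fun k => p k c) hAM.le
      rw [finsum_eq_sum_of_support_subset _ hsupp, h3, hp_top M c le_rfl,
        hp_zero A c hc hdA, sub_zero]
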